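/- Let $g \ge 2$, $n \ge 3$ and $d$ be integers with $n/2 < d < n$. Then $\min\big\{\, n d_1 - n_1 d + n_1(n - n_1)(g-1) \;:\; n_1, d_1 \in \mathbb{Z},\ 0 < n_1 < n,\ n d_1 > n_1 d \,\big\} = (n - d) + (n-1)(g-1),$ and the minimum is attained at $(n_1, d_1) = (1, 1)$. -/

import Mathlib

/-- Remark 3.4 made precise: for `g ≥ 2`, `n ≥ 3` and `n/2 < d < n`, the least
codimension `n d₁ - n₁ d + n₁(n-n₁)(g-1)` over pairs `(n₁, d₁)` with
`0 < n₁ < n` and `d₁/n₁ > d/n` is `(n-d) + (n-1)(g-1)`, attained at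
`(n₁, d₁) = (1, 1)`. -/
theorem stmt_8 (g n d : ℤ) (hg : 2 ≤ g) (hn : 3 ≤ n)
    (hd1 : n < 2 * d) (hd2 : d < n) :
    IsLeast {x : ℤ | ∃ n₁ d₁ : ℤ, 0 < n₁ ∧ n₁ < n ∧ n₁ * d < n * d₁ ∧
        x = n * d₁ - n₁ * d + n₁ * (n - n₁) * (g - 1)}
      ((n - d) + (n - 1) * (g - 1)) ∧
    (n - d) + (n - 1) * (g - 1)
      = n * 1 - 1 * d + 1 * (n - 1) * (g - 1) := by
  have hd : 2 ≤ d := by linarith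
  refine ⟨⟨⟨1, 1, one_pos, by linarith, by linarith, by ring⟩, ?_⟩, by ring⟩
  rintro x ⟨n₁, d₁, h1, h2, h3, rfl⟩
  -- key: K := n*d₁ - n₁*d - (n-d) + (n₁-1)*(n-n₁-1) ≥ 0
  have hK : 0 ≤ n * d₁ - n₁ * d - (n - d) + (n₁ - 1) * (n - n₁ - 1) := by
    rcases eq_or_lt_of_le (show (1:ℤ) ≤ n₁ by omega) with h | h
    · -- n₁ = 1
      have hn1 : n₁ = 1 := h.symm ▸ rfl
      subst hn1
      have hd₁ : 1 ≤ d₁ := by nlinarith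
      nlinarith
    · rcases eq_or_lt_of_le (by linarith : n₁ + 1 ≤ n) with h' | h'
      · -- n₁ = n - 1
        have hn1 : n₁ = n - 1 := by linarith
        subst hn1
        have hd₁ : d ≤ d₁ := by nlinarith
        nlinarith
      · -- 2 ≤ n₁ ≤ n - 2
        nlinarith [mul_nonneg (by linarith : (0:ℤ) ≤ n₁ - 2) (by linarith : (0:ℤ) ≤ n - n₁ - 2)]
  have hfac : 0 ≤ n₁ * (n - n₁) - (n - 1) := by nlinarith
  nlinarith [mul_nonneg (by linarith : (0:ℤ) ≤ g - 2) hfac]
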